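/- Let h : ℝ² → ℝ be of class C² with h(x+1, x̄+1) = h(x, x̄) and h₁₂(x, x̄) < 0 for all (x, x̄) ∈ ℝ². Let φ : ℝ → ℝ be an increasing bi-Lipschitz homeomorphism with φ(x+1) = φ(x) + 1 satisfying h₂(φ⁻¹(x), x) + h₁(x, φ(x)) = 0 for all x ∈ ℝ. Define a(x) = h₂₂(φ⁻¹(x), x) + h₁₁(x, φ(x)). Then a(x) > 0 for all x ∈ ℝ. -/

import Mathlib

/-- Partial derivative of `h` with respect to its first argument. -/
noncomputable def h1 (h : ℝ → ℝ → ℝ) (x y : ℝ) : ℝ := deriv (fun u => h u y) x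

/-- Partial derivative of `h` with respect to its second argument. -/
noncomputable def h2 (h : ℝ → ℝ → ℝ) (x y : ℝ) : ℝ := deriv (fun v => h x v) y

/-- Second partial derivative of `h` with respect to its first argument, twice. -/
noncomputable def h11 (h : ℝ → ℝ → ℝ) (x y : ℝ) : ℝ := deriv (fun u => h1 h u y) x

/-- Mixed second partial derivative of `h`. -/
noncomputable def h12 (h : ℝ → ℝ → ℝ) (x y : ℝ) : ℝ := deriv (fun v => h1 h x v) y

/-- Second partial derivative of `h` with respect to its second argument, twice. -/
noncomputable def h22 (h : ℝ → ℝ → ℝ) (x y : ℝ) : ℝ := deriv (fun v => h2 h x v) y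

set_option maxHeartbeats 1000000 in
/-- on an invariant curve, `a(x) = h₂₂(φ⁻¹(x),x) + h₁₁(x,φ(x)) > 0`
for all `x`. -/
theorem second_variation_positive (h : ℝ → ℝ → ℝ)
    (hC2 : ContDiff ℝ 2 (fun p : ℝ × ℝ => h p.1 p.2))
    (hper : ∀ x y, h (x + 1) (y + 1) = h x y)
    (htwist : ∀ x y, h12 h x y < 0)
    (φ ψ : ℝ → ℝ) (hmono : StrictMono φ) (K : NNReal)
    (hlip : LipschitzWith K φ) (halip : AntilipschitzWith K φ)
    (hlinv : Function.LeftInverse ψ φ) (hrinv : Function.RightInverse ψ φ)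
    (hcomm : ∀ x, φ (x + 1) = φ x + 1)
    (hEL : ∀ x, h2 h (ψ x) x + h1 h x (φ x) = 0)
    (a : ℝ → ℝ)
    (ha : ∀ x, a x = h22 h (ψ x) x + h11 h x (φ x)) :
    ∀ x : ℝ, 0 < a x := by
  intro x
  -- setup
  set f : ℝ × ℝ → ℝ := fun p => h p.1 p.2 with hfdef
  have hfd : Differentiable ℝ f := hC2.differentiable (by norm_num)
  set D : ℝ × ℝ → (ℝ × ℝ →L[ℝ] ℝ) := fderiv ℝ f with hDdef
  have hDc1 : ContDiff ℝ 1 D := hC2.fderiv_right (by norm_num)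
  have hDd : Differentiable ℝ D := hDc1.differentiable one_ne_zero
  set D2 : ℝ × ℝ → (ℝ × ℝ →L[ℝ] ℝ × ℝ →L[ℝ] ℝ) := fderiv ℝ D with hD2def
  have hD2c : Continuous D2 := hDc1.continuous_fderiv one_ne_zero
  -- derivative along the first coordinate line
  have comp1 : ∀ (G : ℝ × ℝ → ℝ), Differentiable ℝ G → ∀ x y : ℝ,
      HasDerivAt (fun u => G (u, y)) (fderiv ℝ G (x, y) (1, 0)) x := by
    intro G hG x y
    exact (hG (x, y)).hasFDerivAt.comp_hasDerivAt x
      ((hasDerivAt_id x).prodMk (hasDerivAt_const x y))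
  have comp2 : ∀ (G : ℝ × ℝ → ℝ), Differentiable ℝ G → ∀ x y : ℝ,
      HasDerivAt (fun v => G (x, v)) (fderiv ℝ G (x, y) (0, 1)) y := by
    intro G hG x y
    exact (hG (x, y)).hasFDerivAt.comp_hasDerivAt y
      ((hasDerivAt_const y x).prodMk (hasDerivAt_id y))
  have eq1 : ∀ x y : ℝ, h1 h x y = D (x, y) (1, 0) := fun x y => (comp1 f hfd x y).deriv
  have eq2 : ∀ x y : ℝ, h2 h x y = D (x, y) (0, 1) := fun x y => (comp2 f hfd x y).deriv
  -- evaluation maps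
  have hev : ∀ (v : ℝ × ℝ) (p : ℝ × ℝ), HasFDerivAt (fun q => D q v)
      ((ContinuousLinearMap.apply ℝ ℝ v).comp (D2 p)) p := by
    intro v p
    exact (ContinuousLinearMap.apply ℝ ℝ v).hasFDerivAt.comp p (hDd p).hasFDerivAt
  have gd : ∀ v : ℝ × ℝ, Differentiable ℝ (fun q => D q v) :=
    fun v p => (hev v p).differentiableAt
  have fderiv_ev : ∀ (v p w : ℝ × ℝ), fderiv ℝ (fun q => D q v) p w = D2 p w v := by
    intro v p w
    rw [(hev v p).fderiv]
    rfl
  have hfun1 : ∀ y : ℝ, (fun u => h1 h u y) = fun u => D (u, y) (1, 0) :=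
    fun y => funext fun u => eq1 u y
  have hfun1' : ∀ x : ℝ, (fun v => h1 h x v) = fun v => D (x, v) (1, 0) :=
    fun x => funext fun v => eq1 x v
  have hfun2 : ∀ y : ℝ, (fun u => h2 h u y) = fun u => D (u, y) (0, 1) :=
    fun y => funext fun u => eq2 u y
  have hfun2' : ∀ x : ℝ, (fun v => h2 h x v) = fun v => D (x, v) (0, 1) :=
    fun x => funext fun v => eq2 x v
  have HD11 : ∀ x y : ℝ, HasDerivAt (fun u => h1 h u y) (D2 (x, y) (1, 0) (1, 0)) x := by
    intro x y
    have := comp1 (fun q => D q (1, 0)) (gd (1, 0)) x y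
    rw [fderiv_ev] at this
    rw [hfun1 y]
    exact this
  have HD12 : ∀ x y : ℝ, HasDerivAt (fun v => h1 h x v) (D2 (x, y) (0, 1) (1, 0)) y := by
    intro x y
    have := comp2 (fun q => D q (1, 0)) (gd (1, 0)) x y
    rw [fderiv_ev] at this
    rw [hfun1' x]
    exact this
  have HD21 : ∀ x y : ℝ, HasDerivAt (fun u => h2 h u y) (D2 (x, y) (1, 0) (0, 1)) x := by
    intro x y
    have := comp1 (fun q => D q (0, 1)) (gd (0, 1)) x y
    rw [fderiv_ev] at this
    rw [hfun2 y]
    exact this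
  have HD22 : ∀ x y : ℝ, HasDerivAt (fun v => h2 h x v) (D2 (x, y) (0, 1) (0, 1)) y := by
    intro x y
    have := comp2 (fun q => D q (0, 1)) (gd (0, 1)) x y
    rw [fderiv_ev] at this
    rw [hfun2' x]
    exact this
  have eq11 : ∀ x y : ℝ, h11 h x y = D2 (x, y) (1, 0) (1, 0) := fun x y => (HD11 x y).deriv
  have eq12 : ∀ x y : ℝ, h12 h x y = D2 (x, y) (0, 1) (1, 0) := fun x y => (HD12 x y).deriv
  have eq22 : ∀ x y : ℝ, h22 h x y = D2 (x, y) (0, 1) (0, 1) := fun x y => (HD22 x y).deriv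
  -- symmetry of the second derivative
  have hsym : ∀ (p v w : ℝ × ℝ), D2 p v w = D2 p w v := by
    intro p v w
    exact (hC2.contDiffAt.isSymmSndFDerivAt (by simp)) v w
  -- twist condition in terms of D2
  have htw : ∀ x y : ℝ, D2 (x, y) (0, 1) (1, 0) < 0 := by
    intro x y
    rw [← eq12]
    exact htwist x y
  -- monotonicity of ψ
  have hψmono : Monotone ψ := by
    intro s t hst
    refine hmono.le_iff_le.mp ?_
    rw [hrinv s, hrinv t]
    exact hst
  -- K is positive
  have hK : (0 : ℝ) < (K : ℝ) := by
    rcases eq_or_ne K 0 with h0 | h0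
    · exfalso
      have := halip.le_mul_dist (0 : ℝ) 1
      rw [h0] at this
      simp [Real.dist_eq] at this
      linarith
    · exact_mod_cast (zero_le : 0 ≤ K).lt_of_ne (Ne.symm h0)
  -- compact set and uniform twist bound
  set S : Set (ℝ × ℝ) := Set.Icc x (x + 1) ×ˢ Set.Icc (φ x) (φ x + 1) with hSdef
  have hScomp : IsCompact S := isCompact_Icc.prod isCompact_Icc
  have hSne : S.Nonempty := ⟨(x, φ x), ⟨⟨le_rfl, by linarith⟩, ⟨le_rfl, by linarith⟩⟩⟩
  have hcont12 : Continuous fun p : ℝ × ℝ => D2 p (0, 1) (1, 0) :=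
    (hD2c.clm_apply continuous_const).clm_apply continuous_const
  obtain ⟨p0, hp0S, hp0⟩ := hScomp.exists_isMaxOn hSne hcont12.continuousOn
  set m : ℝ := -(D2 p0 (0, 1) (1, 0)) with hmdef
  have hmpos : 0 < m := by
    have := htw p0.1 p0.2
    rw [Prod.mk.eta] at this
    linarith
  set c : ℝ := m / K with hcdef
  have hcpos : 0 < c := div_pos hmpos hK
  -- the comparison function
  set F : ℝ → ℝ := fun t => h2 h (ψ x) t + h1 h t (φ x) with hFdef
  have hF0 : F x = 0 := hEL x
  have hF' : HasDerivAt F (a x) x := by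
    have := (HD22 (ψ x) x).add (HD11 x (φ x))
    rw [ha x, eq22, eq11]
    exact this
  -- key lower bound for F on the right of x
  have key : ∀ t ∈ Set.Ioo x (x + 1), c * (t - x) ≤ F t := by
    intro t ht
    obtain ⟨htx, ht1⟩ := ht
    have hφ : φ x < φ t := hmono htx
    have hφ1 : φ t ≤ φ x + 1 := by
      have := hmono.monotone ht1.le
      rwa [hcomm x] at this
    -- term 1 : h2 is strictly decreasing in its first variable
    have anti : StrictAnti (fun u => h2 h u t) := by
      apply strictAnti_of_deriv_neg
      intro u
      rw [(HD21 u t).deriv, hsym]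
      exact htw u t
    have term1 : h2 h (ψ t) t ≤ h2 h (ψ x) t := anti.antitone (hψmono htx.le)
    -- term 2 : mean value theorem in the second variable
    obtain ⟨η, hη, hηeq⟩ := exists_hasDerivAt_eq_slope (fun v => h1 h t v)
      (fun v => D2 (t, v) (0, 1) (1, 0)) hφ
      (fun v _ => ((HD12 t v).differentiableAt).continuousAt.continuousWithinAt)
      (fun v _ => HD12 t v)
    have hηS : (t, η) ∈ S := ⟨⟨htx.le, ht1.le⟩, ⟨hη.1.le, le_trans hη.2.le hφ1⟩⟩
    have hmb : D2 (t, η) (0, 1) (1, 0) ≤ -m := by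
      have hle : D2 (t, η) (0, 1) (1, 0) ≤ D2 p0 (0, 1) (1, 0) := hp0 hηS
      rw [hmdef]
      linarith
    have hden : (0 : ℝ) < φ t - φ x := sub_pos.mpr hφ
    rw [eq_div_iff hden.ne'] at hηeq
    have hsub : m * (φ t - φ x) ≤ h1 h t (φ x) - h1 h t (φ t) := by
      nlinarith [hηeq, hmb, hden]
    -- antilipschitz bound
    have hal : t - x ≤ (K : ℝ) * (φ t - φ x) := by
      have := halip.le_mul_dist t x
      rw [Real.dist_eq, Real.dist_eq, abs_of_pos (sub_pos.mpr htx), abs_of_pos hden] at this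
      exact_mod_cast this
    have hc1 : c * (t - x) ≤ m * (φ t - φ x) := by
      rw [hcdef, div_mul_eq_mul_div, div_le_iff₀ hK]
      nlinarith [hmpos, hal]
    have hel := hEL t
    have : F t = (h2 h (ψ x) t - h2 h (ψ t) t) + (h1 h t (φ x) - h1 h t (φ t)) := by
      rw [hFdef]
      simp only
      linarith
    linarith
  -- conclude via the limit of slopes from the right
  have hslope : Filter.Tendsto (slope F x) (nhdsWithin x (Set.Ioi x)) (nhds (a x)) := by
    have := hasDerivAt_iff_tendsto_slope.mp hF'
    exact this.mono_left (nhdsWithin_mono x fun y hy => ne_of_gt hy)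
  have hbound : ∀ᶠ t in nhdsWithin x (Set.Ioi x), c ≤ slope F x t := by
    filter_upwards [Ioo_mem_nhdsGT (lt_add_one x)] with t ht
    have htx : 0 < t - x := sub_pos.mpr ht.1
    rw [slope_def_field, le_div_iff₀ htx, hF0, sub_zero]
    exact key t ht
  have : c ≤ a x := ge_of_tendsto hslope hbound
  linarith
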